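/- Let A ∈ ℂ^{N×N} be Hermitian with all eigenvalues contained in the interval [κ, μ] where 0 < κ ≤ μ, let n ≥ 1 be a natural number, and let τ > 0 satisfy τ · μ ≤ 1. Set g_τ = Σ_{k=0}^{n} (1/k!) (−τ A)^k and v = Σ_{k=0}^{n} (1/k!) (−τ κ)^k, so 0 ≤ v < 1. Then for every u₀ ∈ ℂ^N and all natural numbers k, j: ‖g_τ^{k+j} u₀ − g_τ^{k} u₀‖ ≤ v^k · ‖g_τ^{j} − I‖₂ · ‖u₀‖ ≤ 2 v^k ‖u₀‖ (Euclidean norm on vectors); in particular the sequence (g_τ^{k} u₀)_{k≥0} is a Cauchy sequence. -/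

import Mathlib

open scoped Matrix Matrix.Norms.L2Operator

/-- The Euclidean (ℓ²) norm of a vector in `ℂ^N`. -/
noncomputable def euclNorm {N : ℕ} (x : Fin N → ℂ) : ℝ :=
  ‖(WithLp.equiv 2 (Fin N → ℂ)).symm x‖

/-! ### Auxiliary real-analysis lemmas about the truncated exponential series -/

noncomputable def truncExp (m : ℕ) (t : ℝ) : ℝ :=
  ∑ k ∈ Finset.range (m + 1), (-t) ^ k / (Nat.factorial k : ℝ)

lemma truncExp_succ (m : ℕ) (t : ℝ) :
    truncExp (m + 1) t = truncExp m t + (-t) ^ (m + 1) / (Nat.factorial (m + 1) : ℝ) := by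
  simp [truncExp, Finset.sum_range_succ]

lemma term_mono {t : ℝ} (h0 : 0 ≤ t) (h1 : t ≤ 1) (k : ℕ) :
    t ^ (k + 1) / (Nat.factorial (k + 1) : ℝ) ≤ t ^ k / (Nat.factorial k : ℝ) := by
  apply div_le_div₀ (by positivity) _ (by positivity)
    (by exact_mod_cast Nat.factorial_le (Nat.le_succ k))
  calc t ^ (k + 1) = t ^ k * t := by ring
  _ ≤ t ^ k * 1 := by nlinarith [pow_nonneg h0 k]
  _ = t ^ k := by ring

lemma truncExp_lower {t : ℝ} (h0 : 0 ≤ t) (h1 : t ≤ 1) (m : ℕ) : 1 - t ≤ truncExp m t := by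
  have key : ∀ m, 1 - t ≤ truncExp m t ∧ 1 - t ≤ truncExp (m + 1) t := by
    intro m
    induction m with
    | zero =>
      constructor
      · simp [truncExp]; linarith
      · simp [truncExp, Finset.sum_range_succ]
    | succ m ih =>
      refine ⟨ih.2, ?_⟩
      rcases Nat.even_or_odd m with he | ho
      · have hev : Even (m + 2) := by
          simpa using he.add (even_two)
        have : (-t) ^ (m + 2) = t ^ (m + 2) := hev.neg_pow t
        rw [truncExp_succ]
        have : 0 ≤ (-t) ^ (m + 1 + 1) / (Nat.factorial (m + 1 + 1) : ℝ) := by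
          rw [show m + 1 + 1 = m + 2 from rfl, this]; positivity
        linarith [ih.2]
      · have he1 : Even (m + 1) := ho.add_one
        have ho2 : Odd (m + 2) := by
          simpa using ho.add_even even_two
        rw [truncExp_succ, truncExp_succ, he1.neg_pow, ho2.neg_pow, neg_div]
        have h2 : t ^ (m + 2) / (Nat.factorial (m + 2) : ℝ) ≤
            t ^ (m + 1) / (Nat.factorial (m + 1) : ℝ) := term_mono h0 h1 (m + 1)
        have h' := ih.1
        linarith
  exact (key m).1

lemma truncExp_upper {t : ℝ} (h0 : 0 ≤ t) (h1 : t ≤ 1) (m : ℕ) :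
    truncExp (m + 1) t ≤ 1 - t + t ^ 2 / 2 := by
  have key : ∀ m, truncExp (m + 1) t ≤ 1 - t + t ^ 2 / 2 ∧
      truncExp (m + 2) t ≤ 1 - t + t ^ 2 / 2 := by
    intro m
    induction m with
    | zero =>
      constructor
      · simp only [truncExp, Finset.sum_range_succ, Finset.sum_range_one, Nat.factorial]
        push_cast; ring_nf; nlinarith
      · simp only [truncExp, Finset.sum_range_succ, Finset.sum_range_one, Nat.factorial]
        push_cast; ring_nf
        exact le_rfl
    | succ m ih =>
      refine ⟨ih.2, ?_⟩
      rcases Nat.even_or_odd m with he | ho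
      · -- m even, m+3 odd
        have ho3 : Odd (m + 3) := by
          rcases he with ⟨r, hr⟩; exact ⟨r + 1, by omega⟩
        rw [show m + 1 + 2 = m + 2 + 1 from rfl, truncExp_succ, ho3.neg_pow, neg_div]
        have h2 : (0:ℝ) ≤ t ^ (m + 2 + 1) / (Nat.factorial (m + 2 + 1) : ℝ) := by positivity
        linarith [ih.2]
      · -- m odd, m+2 odd, m+3 even
        have ho2 : Odd (m + 2) := by simpa using ho.add_even even_two
        have he3 : Even (m + 3) := by rcases ho with ⟨r, hr⟩; exact ⟨r + 2, by omega⟩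
        rw [show m + 1 + 2 = m + 1 + 1 + 1 from rfl, truncExp_succ, truncExp_succ,
          ho2.neg_pow, he3.neg_pow, neg_div]
        have h2 : t ^ (m + 1 + 1 + 1) / (Nat.factorial (m + 1 + 1 + 1) : ℝ) ≤
            t ^ (m + 1 + 1) / (Nat.factorial (m + 1 + 1) : ℝ) := term_mono h0 h1 (m + 1 + 1)
        linarith [ih.1]
  rcases m with _ | m
  · exact (key 0).1
  · exact (key m).2

lemma truncExp_hasDeriv (m : ℕ) (t : ℝ) :
    HasDerivAt (truncExp (m + 1)) (-(truncExp m t)) t := by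
  have h : ∀ k ∈ Finset.range (m + 2), HasDerivAt (fun s : ℝ => (-s) ^ k / (Nat.factorial k : ℝ))
      (((k : ℝ) * (-t) ^ (k - 1) * (-1)) / (Nat.factorial k : ℝ)) t := by
    intro k _
    have h1 : HasDerivAt (fun s : ℝ => -s) (-1) t := (hasDerivAt_id t).neg
    have h2 := (hasDerivAt_pow k (-t)).comp t h1
    exact h2.div_const _
  have hsum := HasDerivAt.fun_sum h
  refine hsum.congr_deriv ?_
  symm
  rw [Finset.sum_range_succ']
  simp only [Nat.cast_zero, zero_mul, zero_div, add_zero]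
  rw [truncExp, ← Finset.sum_neg_distrib]
  apply Finset.sum_congr rfl
  intro k _
  have hfac : (Nat.factorial (k + 1) : ℝ) = (k + 1) * Nat.factorial k := by
    push_cast [Nat.factorial_succ]; ring
  have hk : ((k : ℝ) + 1) ≠ 0 := by positivity
  have hf : (Nat.factorial k : ℝ) ≠ 0 := by positivity
  rw [hfac]
  push_cast
  field_simp

lemma truncExp_antitone (m : ℕ) : AntitoneOn (truncExp (m + 1)) (Set.Icc 0 1) := by
  have hdiff : Differentiable ℝ (truncExp (m + 1)) :=
    fun t => (truncExp_hasDeriv m t).differentiableAt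
  apply antitoneOn_of_deriv_nonpos (convex_Icc 0 1) hdiff.continuous.continuousOn
    hdiff.differentiableOn
  intro x hx
  rw [interior_Icc] at hx
  rw [(truncExp_hasDeriv m x).deriv]
  have h1 := truncExp_lower (le_of_lt hx.1) (le_of_lt hx.2) m
  have h2 := hx.2
  linarith

/-! ### Auxiliary matrix lemmas -/

lemma eucl_mulVec_le {N : ℕ} (M : Matrix (Fin N) (Fin N) ℂ) (x : Fin N → ℂ) :
    euclNorm (M.mulVec x) ≤ ‖M‖ * euclNorm x :=
  M.l2_opNorm_mulVec ((WithLp.equiv 2 (Fin N → ℂ)).symm x)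

lemma diag_norm_le {N : ℕ} (d : Fin N → ℂ) {c : ℝ} (hc : 0 ≤ c) (h : ∀ i, ‖d i‖ ≤ c) :
    ‖Matrix.diagonal d‖ ≤ c := by
  rw [Matrix.l2_opNorm_def]
  apply ContinuousLinearMap.opNorm_le_bound _ hc
  intro x
  have hx : ∀ y : EuclideanSpace ℂ (Fin N), ‖y‖ = Real.sqrt (∑ i, ‖y i‖ ^ 2) := fun y =>
    EuclideanSpace.norm_eq y
  show ‖(Matrix.toEuclideanLin (Matrix.diagonal d) x : EuclideanSpace ℂ (Fin N))‖ ≤ c * ‖x‖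
  rw [hx, hx]
  have happ : ∀ i, (Matrix.toEuclideanLin (Matrix.diagonal d) x : EuclideanSpace ℂ (Fin N)) i
      = d i * x i := by
    intro i
    show ((Matrix.diagonal d).mulVec (WithLp.equiv 2 (Fin N → ℂ) x)) i = _
    rw [Matrix.mulVec_diagonal]
    rfl
  calc Real.sqrt (∑ i, ‖(Matrix.toEuclideanLin (Matrix.diagonal d) x :
        EuclideanSpace ℂ (Fin N)) i‖ ^ 2)
      ≤ Real.sqrt (∑ i, c ^ 2 * ‖x i‖ ^ 2) := by
        apply Real.sqrt_le_sqrt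
        apply Finset.sum_le_sum
        intro i _
        rw [happ i]
        calc ‖d i * x i‖ ^ 2 = ‖d i‖ ^ 2 * ‖x i‖ ^ 2 := by rw [norm_mul]; ring
        _ ≤ c ^ 2 * ‖x i‖ ^ 2 := by
            have h2 : ‖d i‖ ^ 2 ≤ c ^ 2 := by nlinarith [h i, norm_nonneg (d i)]
            exact mul_le_mul_of_nonneg_right h2 (sq_nonneg _)
    _ = c * Real.sqrt (∑ i, ‖x i‖ ^ 2) := by
        rw [← Finset.mul_sum, Real.sqrt_mul (by positivity), Real.sqrt_sq hc]

lemma unitary_conj_pow {N : ℕ} (U M : Matrix (Fin N) (Fin N) ℂ) (hU : star U * U = 1)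
    (hU' : U * star U = 1) (k : ℕ) : (U * M * star U) ^ k = U * M ^ k * star U := by
  induction k with
  | zero => simp [hU']
  | succ k ih =>
    rw [pow_succ, ih, pow_succ]
    have h1 : star U * (U * (M * star U)) = M * star U := by
      rw [← mul_assoc, hU, one_mul]
    simp only [mul_assoc, h1]

/-- Cauchy condition: if `A` is Hermitian with all eigenvalues in `[κ, μ]`, `0 < κ ≤ μ`,
`n ≥ 1` and `0 < τ` with `τ · μ ≤ 1`, set `g = ∑_{k=0}^{n} (1/k!) (−τ A)^k` and
`v = ∑_{k=0}^{n} (1/k!) (−τ κ)^k`; then `0 ≤ v < 1`, for all `u₀`, `k`, `j` one has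
`‖g^{k+j} u₀ − g^k u₀‖ ≤ v^k ‖g^j − I‖₂ ‖u₀‖ ≤ 2 v^k ‖u₀‖`, and `(g^k u₀)_k` is Cauchy. -/
theorem truncated_exp_semigroup_cauchy {N : ℕ} (A : Matrix (Fin N) (Fin N) ℂ)
    (hA : A.IsHermitian) (κ μ : ℝ) (hκ : 0 < κ) (hκμ : κ ≤ μ)
    (heig : ∀ i, hA.eigenvalues i ∈ Set.Icc κ μ)
    (n : ℕ) (hn : 1 ≤ n) (τ : ℝ) (hτ : 0 < τ) (hτμ : τ * μ ≤ 1)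
    (g : Matrix (Fin N) (Fin N) ℂ)
    (hg : g = ∑ k ∈ Finset.range (n + 1), ((Nat.factorial k : ℂ))⁻¹ • ((-(τ : ℂ)) • A) ^ k)
    (v : ℝ) (hv : v = ∑ k ∈ Finset.range (n + 1), (-(τ * κ)) ^ k / (Nat.factorial k : ℝ)) :
    (0 ≤ v ∧ v < 1) ∧
      (∀ (u₀ : Fin N → ℂ) (k j : ℕ),
        euclNorm ((g ^ (k + j)).mulVec u₀ - (g ^ k).mulVec u₀)
            ≤ v ^ k * ‖g ^ j - 1‖ * euclNorm u₀ ∧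
          v ^ k * ‖g ^ j - 1‖ * euclNorm u₀ ≤ 2 * v ^ k * euclNorm u₀) ∧
      ∀ u₀ : Fin N → ℂ,
        CauchySeq fun k : ℕ => (WithLp.equiv 2 (Fin N → ℂ)).symm ((g ^ k).mulVec u₀) := by
  obtain ⟨m, rfl⟩ : ∃ m, n = m + 1 := ⟨n - 1, by omega⟩
  have hv' : v = truncExp (m + 1) (τ * κ) := hv
  -- basic bounds on s := τ * κ
  have hs0 : 0 < τ * κ := mul_pos hτ hκ
  have hs1 : τ * κ ≤ 1 := le_trans (mul_le_mul_of_nonneg_left hκμ hτ.le) hτμ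
  have hv0 : 0 ≤ v := by
    rw [hv']
    have := truncExp_lower hs0.le hs1 (m + 1)
    linarith
  have hv1 : v < 1 := by
    rw [hv']
    have := truncExp_upper hs0.le hs1 m
    nlinarith
  -- spectral decomposition of g
  set U : Matrix (Fin N) (Fin N) ℂ := (hA.eigenvectorUnitary : Matrix (Fin N) (Fin N) ℂ) with hUdef
  have hUm : U ∈ unitary (Matrix (Fin N) (Fin N) ℂ) := hA.eigenvectorUnitary.prop
  have hU : star U * U = 1 := (Unitary.mem_iff.mp hUm).1
  have hU' : U * star U = 1 := (Unitary.mem_iff.mp hUm).2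
  set e : Fin N → ℂ := fun i => -(τ : ℂ) * (hA.eigenvalues i : ℂ) with hedef
  set d : Fin N → ℂ := fun i => ((truncExp (m + 1) (τ * hA.eigenvalues i) : ℝ) : ℂ) with hddef
  have hAconj : (-(τ : ℂ)) • A = U * Matrix.diagonal e * star U := by
    conv_lhs => rw [hA.spectral_theorem]
    have hde : Matrix.diagonal e
        = (-(τ : ℂ)) • Matrix.diagonal (RCLike.ofReal ∘ hA.eigenvalues) := by
      rw [← Matrix.diagonal_smul]
      congr 1
    rw [hde, Matrix.mul_smul, Matrix.smul_mul]
    rfl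

  have key : g = U * Matrix.diagonal d * star U := by
    rw [hg]
    have hterm : ∀ k, ((Nat.factorial k : ℂ))⁻¹ • ((-(τ : ℂ)) • A) ^ k
        = U * (((Nat.factorial k : ℂ))⁻¹ • Matrix.diagonal (fun i => e i ^ k)) * star U := by
      intro k
      rw [hAconj, unitary_conj_pow U _ hU hU', Matrix.diagonal_pow, Matrix.mul_smul,
        Matrix.smul_mul]
      rfl
    rw [Finset.sum_congr rfl (fun k _ => hterm k), ← Finset.sum_mul, ← Finset.mul_sum]
    congr 1
    congr 1
    ext i j
    rw [Matrix.sum_apply]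
    by_cases hij : i = j
    · subst hij
      simp only [Matrix.smul_apply, Matrix.diagonal_apply_eq, smul_eq_mul]
      rw [hddef]
      simp only [truncExp]
      push_cast
      apply Finset.sum_congr rfl
      intro k _
      rw [hedef]
      push_cast
      ring
    · simp [Matrix.diagonal_apply_ne _ hij]
  -- norm bound for g
  have hdi : ∀ i, ‖d i‖ ≤ v := by
    intro i
    have ht0 : τ * κ ≤ τ * hA.eigenvalues i := mul_le_mul_of_nonneg_left (heig i).1 hτ.le
    have ht1 : τ * hA.eigenvalues i ≤ 1 :=
      le_trans (mul_le_mul_of_nonneg_left (heig i).2 hτ.le) hτμ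
    have ht0' : 0 ≤ τ * hA.eigenvalues i := le_trans hs0.le ht0
    rw [hddef]
    simp only [Complex.norm_real, Real.norm_eq_abs]
    rw [abs_le]
    constructor
    · have := truncExp_lower ht0' ht1 (m + 1)
      linarith
    · rw [hv']
      exact truncExp_antitone m ⟨hs0.le, hs1⟩ ⟨ht0', ht1⟩ ht0
  have hnorm : ‖g‖ ≤ v := by
    rw [key, mul_assoc, CStarRing.norm_mem_unitary_mul _ hUm,
      CStarRing.norm_mul_mem_unitary _ (Unitary.star_mem hUm)]
    exact diag_norm_le d hv0 hdi
  have hone : ‖(1 : Matrix (Fin N) (Fin N) ℂ)‖ ≤ 1 := by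
    rw [← Matrix.diagonal_one]
    exact diag_norm_le _ zero_le_one (fun i => by simp)
  have hpow : ∀ j, ‖g ^ j‖ ≤ v ^ j := by
    intro j
    induction j with
    | zero => simpa using hone
    | succ j ih =>
      rw [pow_succ, pow_succ]
      exact le_trans (Matrix.l2_opNorm_mul _ _)
        (mul_le_mul ih hnorm (norm_nonneg _) (pow_nonneg hv0 _))
  have hsub : ∀ j, ‖g ^ j - 1‖ ≤ 2 := by
    intro j
    have h1 := hpow j
    have h2 : v ^ j ≤ 1 := pow_le_one₀ hv0 hv1.le
    calc ‖g ^ j - 1‖ ≤ ‖g ^ j‖ + ‖(1 : Matrix (Fin N) (Fin N) ℂ)‖ := norm_sub_le _ _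
      _ ≤ 2 := by linarith
  have hmain : ∀ (u₀ : Fin N → ℂ) (k j : ℕ),
      euclNorm ((g ^ (k + j)).mulVec u₀ - (g ^ k).mulVec u₀)
          ≤ v ^ k * ‖g ^ j - 1‖ * euclNorm u₀ ∧
        v ^ k * ‖g ^ j - 1‖ * euclNorm u₀ ≤ 2 * v ^ k * euclNorm u₀ := by
    intro u₀ k j
    have hu : (0 : ℝ) ≤ euclNorm u₀ := norm_nonneg _
    constructor
    · have hdecomp : (g ^ (k + j)).mulVec u₀ - (g ^ k).mulVec u₀
          = (g ^ k * (g ^ j - 1)).mulVec u₀ := by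
        rw [Matrix.mul_sub, mul_one, ← pow_add, Matrix.sub_mulVec]
      rw [hdecomp]
      refine le_trans (eucl_mulVec_le _ _) ?_
      apply mul_le_mul_of_nonneg_right _ hu
      calc ‖g ^ k * (g ^ j - 1)‖ ≤ ‖g ^ k‖ * ‖g ^ j - 1‖ := Matrix.l2_opNorm_mul _ _
        _ ≤ v ^ k * ‖g ^ j - 1‖ := mul_le_mul_of_nonneg_right (hpow k) (norm_nonneg _)
    · have h2 := hsub j
      have hvk : (0 : ℝ) ≤ v ^ k := pow_nonneg hv0 k
      calc v ^ k * ‖g ^ j - 1‖ * euclNorm u₀ ≤ v ^ k * 2 * euclNorm u₀ :=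
            mul_le_mul_of_nonneg_right (mul_le_mul_of_nonneg_left h2 hvk) hu
        _ = 2 * v ^ k * euclNorm u₀ := by ring
  refine ⟨⟨hv0, hv1⟩, hmain, ?_⟩
  intro u₀
  apply cauchySeq_of_le_geometric v (2 * euclNorm u₀) hv1
  intro k
  rw [dist_eq_norm, norm_sub_rev]
  have hb := (hmain u₀ k 1).1.trans (hmain u₀ k 1).2
  calc ‖(WithLp.equiv 2 (Fin N → ℂ)).symm ((g ^ (k + 1)).mulVec u₀)
        - (WithLp.equiv 2 (Fin N → ℂ)).symm ((g ^ k).mulVec u₀)‖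
      = euclNorm ((g ^ (k + 1)).mulVec u₀ - (g ^ k).mulVec u₀) := rfl
    _ ≤ 2 * v ^ k * euclNorm u₀ := hb
    _ = 2 * euclNorm u₀ * v ^ k := by ring
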